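/- arXiv:math/0210134 — 6 statements merged into one kernel-verified Lean document; each statement's English description precedes it below -/
import Mathlib

section
/- With notation as above (f₀, h₀ defined from symmetric components C₁₁₁, C₁₁₂, C₁₂₂, C₂₂₂, and σ₁₁ = (C₁₁₁,C₁₁₂), σ₁₂ = (C₁₁₂,C₁₂₂), σ₂₂ = (C₁₂₂,C₂₂₂) in ℝ²), the ellipse of curvature is a circle, i.e. ‖σ₁₁-σ₂₂‖²/4 = ‖σ₁₂‖² and ⟨σ₁₁-σ₂₂, σ₁₂⟩ = 0, if and only if f₀ · conj(h₀) = 0, i.e. f₀ = 0 or h₀ = 0. -/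
open RealInnerProductSpace

/-- Central observation of the proof of Theorem 1: with `σ₁₁ = (C₁₁₁,C₁₁₂)`,
`σ₁₂ = (C₁₁₂,C₁₂₂)`, `σ₂₂ = (C₁₂₂,C₂₂₂)` in `ℝ²` and
`f₀ = ((C₁₁₁ - 3C₁₂₂) + i(C₂₂₂ - 3C₁₁₂))/2`, `h₀ = ((C₁₁₁ + C₁₂₂) + i(C₁₁₂ + C₂₂₂))/2`,
the ellipse of curvature is a circle, i.e. `‖σ₁₁-σ₂₂‖²/4 = ‖σ₁₂‖²` and
`⟨σ₁₁-σ₂₂, σ₁₂⟩ = 0`, iff `f₀ · conj h₀ = 0`, i.e. iff `f₀ = 0` or `h₀ = 0`. -/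
theorem circle_iff_f_or_h_zero (C111 C112 C122 C222 : ℝ)
    (σ11 σ12 σ22 : EuclideanSpace ℝ (Fin 2))
    (h11 : σ11 = (WithLp.equiv 2 (Fin 2 → ℝ)).symm ![C111, C112])
    (h12 : σ12 = (WithLp.equiv 2 (Fin 2 → ℝ)).symm ![C112, C122])
    (h22 : σ22 = (WithLp.equiv 2 (Fin 2 → ℝ)).symm ![C122, C222])
    (f0 h0 : ℂ)
    (hf : f0 = (((C111 - 3 * C122 : ℝ) : ℂ) + Complex.I * ((C222 - 3 * C112 : ℝ) : ℂ)) / 2)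
    (hh : h0 = (((C111 + C122 : ℝ) : ℂ) + Complex.I * ((C112 + C222 : ℝ) : ℂ)) / 2) :
    ((‖σ11 - σ22‖ ^ 2 / 4 = ‖σ12‖ ^ 2 ∧ ⟪σ11 - σ22, σ12⟫ = (0 : ℝ)) ↔
        f0 * (starRingEnd ℂ) h0 = 0) ∧
      (f0 * (starRingEnd ℂ) h0 = 0 ↔ (f0 = 0 ∨ h0 = 0)) := by
  subst h11 h12 h22
  have hnorm : ∀ x y : ℝ, ‖((WithLp.equiv 2 (Fin 2 → ℝ)).symm ![x, y])‖ ^ 2 = x ^ 2 + y ^ 2 := by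
    intro x y
    rw [EuclideanSpace.norm_eq, Real.sq_sqrt (by positivity)]
    simp [Fin.sum_univ_two, sq]
  have hsub : ((WithLp.equiv 2 (Fin 2 → ℝ)).symm ![C111, C112]) -
      ((WithLp.equiv 2 (Fin 2 → ℝ)).symm ![C122, C222]) =
      (WithLp.equiv 2 (Fin 2 → ℝ)).symm ![C111 - C122, C112 - C222] := by
    ext i
    fin_cases i <;> simp [WithLp.equiv_symm_apply, PiLp.toLp_apply]
  rw [hsub, hnorm, hnorm]
  have hinner : ⟪((WithLp.equiv 2 (Fin 2 → ℝ)).symm ![C111 - C122, C112 - C222]),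
      ((WithLp.equiv 2 (Fin 2 → ℝ)).symm ![C112, C122])⟫ =
      (C111 - C122) * C112 + (C112 - C222) * C122 := by
    simp [EuclideanSpace.inner_eq_star_dotProduct, dotProduct, Fin.sum_univ_two,
      WithLp.equiv_symm_apply, PiLp.toLp_apply, mul_comm]
  rw [hinner]
  have key : f0 * (starRingEnd ℂ) h0 =
      Complex.ofReal (((C111 - 3*C122)*(C111 + C122) + (C222 - 3*C112)*(C112 + C222))/4) +
      Complex.ofReal (((C222 - 3*C112)*(C111 + C122) - (C111 - 3*C122)*(C112 + C222))/4) *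
        Complex.I := by
    rw [hf, hh, map_div₀, map_add, map_mul, Complex.conj_ofReal, Complex.conj_ofReal,
      Complex.conj_I]
    have h2 : (starRingEnd ℂ) 2 = 2 := map_ofNat _ 2
    rw [h2]
    push_cast
    ring_nf
    rw [Complex.I_sq]
    ring
  have hz : f0 * (starRingEnd ℂ) h0 = 0 ↔
      (((C111 - 3*C122)*(C111 + C122) + (C222 - 3*C112)*(C112 + C222))/4 = 0 ∧
       ((C222 - 3*C112)*(C111 + C122) - (C111 - 3*C122)*(C112 + C222))/4 = 0) := by
    rw [key, Complex.ext_iff]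
    simp
  constructor
  · rw [hz]
    constructor
    · rintro ⟨h1, h2⟩
      constructor
      · linear_combination h1
      · linear_combination -h2
    · rintro ⟨h1, h2⟩
      constructor
      · linear_combination h1
      · linear_combination -h2
  · rw [mul_eq_zero, map_eq_zero]
end

section
/- For t ≥ 0, let c = cosh t, s = sinh t, and define F_t : S² → ℂ³ by F_t(x,y,z) = (1/(c² + s²z²))·(c x + i s x z, c y + i s y z, z + i s c (1+z²)), grouping the six real coordinates into three complex ones. Then for every (x,y,z) ∈ S², ‖F_t(x,y,z)‖² = 1, i.e. F_t maps into the unit sphere S⁵ ⊂ ℂ³. -/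
lemma norm_re_add_I_mul_sq (a b : ℝ) : ‖(a:ℂ)+Complex.I*b‖^2 = a^2+b^2 := by
  rw [Complex.sq_norm]
  simp [Complex.normSq_apply]
  ring

/-- The horizontal lift `F_t` of the Whitney sphere `Φ_t : S² → ℂP²` maps `S²` into the
unit sphere `S⁵ ⊂ ℂ³`: with `c = cosh t`, `s = sinh t` and
`F_t(x,y,z) = (1/(c²+s²z²))·(cx + isxz, cy + isyz, z + isc(1+z²))`,
one has `|F₁|² + |F₂|² + |F₃|² = 1` whenever `x²+y²+z² = 1`. -/
theorem whitney_lift_maps_into_sphere (t : ℝ) (ht : 0 ≤ t) (c s : ℝ)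
    (hc : c = Real.cosh t) (hs : s = Real.sinh t)
    (x y z : ℝ) (hxyz : x ^ 2 + y ^ 2 + z ^ 2 = 1)
    (F1 F2 F3 : ℂ)
    (hF1 : F1 = ((1 / (c ^ 2 + s ^ 2 * z ^ 2) : ℝ) : ℂ) *
      ((c * x : ℝ) + Complex.I * ((s * x * z : ℝ) : ℂ)))
    (hF2 : F2 = ((1 / (c ^ 2 + s ^ 2 * z ^ 2) : ℝ) : ℂ) *
      ((c * y : ℝ) + Complex.I * ((s * y * z : ℝ) : ℂ)))
    (hF3 : F3 = ((1 / (c ^ 2 + s ^ 2 * z ^ 2) : ℝ) : ℂ) *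
      ((z : ℂ) + Complex.I * ((s * c * (1 + z ^ 2) : ℝ) : ℂ))) :
    ‖F1‖ ^ 2 + ‖F2‖ ^ 2 + ‖F3‖ ^ 2 = 1 := by
  have hc1 : 1 ≤ c := by rw [hc]; exact Real.one_le_cosh t
  have hcs : c ^ 2 - s ^ 2 = 1 := by rw [hc, hs]; exact Real.cosh_sq_sub_sinh_sq t
  have hD : 0 < c ^ 2 + s ^ 2 * z ^ 2 := by nlinarith [sq_nonneg (s*z)]
  subst hF1 hF2 hF3
  rw [norm_mul, norm_mul, norm_mul, mul_pow, mul_pow, mul_pow,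
    norm_re_add_I_mul_sq, norm_re_add_I_mul_sq, norm_re_add_I_mul_sq,
    Complex.norm_real, Real.norm_eq_abs, abs_of_pos (by positivity : (0:ℝ) < 1 / (c ^ 2 + s ^ 2 * z ^ 2))]
  field_simp
  linear_combination (c^2+s^2*z^2)*hxyz + (s^2*z^4-z^2-c^2)*hcs
end

section
/- For t ≥ 0 with c = cosh t, s = sinh t, the map F_t : S² → S⁵ ⊂ ℂ³, F_t(x,y,z) = (1/(c²+s²z²))·(cx + isxz, cy + isyz, z + isc(1+z²)), is horizontal with respect to the Hopf fibration: for every p ∈ S² and every u ∈ T_pS², the Hermitian inner product ⟨dF_t(u), iF_t(p)⟩_ℝ = 0, i.e. Re(h(dF_t(u), iF_t(p))) = 0 where h is the standard Hermitian product on ℂ³. -/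
open Metric
open scoped Manifold

/-- The horizontal lift `F_t : S² → S⁵ ⊂ ℂ³` of the Whitney sphere `Φ_t` in `ℂP²`:
`F_t(x,y,z) = (1/(c²+s²z²))·(cx + isxz, cy + isyz, z + isc(1+z²))`, with
`c = cosh t`, `s = sinh t`. -/
noncomputable def whitneyLift (t : ℝ) :
    (sphere (0 : EuclideanSpace ℝ (Fin 3)) 1) → ℂ × ℂ × ℂ := fun p =>
  let x : ℝ := (p : EuclideanSpace ℝ (Fin 3)) 0
  let y : ℝ := (p : EuclideanSpace ℝ (Fin 3)) 1
  let z : ℝ := (p : EuclideanSpace ℝ (Fin 3)) 2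
  let c : ℝ := Real.cosh t
  let s : ℝ := Real.sinh t
  (((1 / (c ^ 2 + s ^ 2 * z ^ 2) : ℝ) : ℂ) * ((c * x : ℝ) + Complex.I * ((s * x * z : ℝ) : ℂ)),
   ((1 / (c ^ 2 + s ^ 2 * z ^ 2) : ℝ) : ℂ) * ((c * y : ℝ) + Complex.I * ((s * y * z : ℝ) : ℂ)),
   ((1 / (c ^ 2 + s ^ 2 * z ^ 2) : ℝ) : ℂ) * ((z : ℂ) + Complex.I * ((s * c * (1 + z ^ 2) : ℝ) : ℂ)))

/-- The real part of the standard Hermitian product on `ℂ³`. -/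
noncomputable def hermRe (U V : ℂ × ℂ × ℂ) : ℝ :=
  (U.1 * (starRingEnd ℂ) V.1 + U.2.1 * (starRingEnd ℂ) V.2.1
    + U.2.2 * (starRingEnd ℂ) V.2.2).re

abbrev E3 := EuclideanSpace ℝ (Fin 3)

/-- The ambient extension of `whitneyLift` to all of `ℝ³`. -/
noncomputable def whitneyG (t : ℝ) : EuclideanSpace ℝ (Fin 3) → ℂ × ℂ × ℂ := fun p =>
  let x : ℝ := p 0
  let y : ℝ := p 1
  let z : ℝ := p 2
  let c : ℝ := Real.cosh t
  let s : ℝ := Real.sinh t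
  (((1 / (c ^ 2 + s ^ 2 * z ^ 2) : ℝ) : ℂ) * ((c * x : ℝ) + Complex.I * ((s * x * z : ℝ) : ℂ)),
   ((1 / (c ^ 2 + s ^ 2 * z ^ 2) : ℝ) : ℂ) * ((c * y : ℝ) + Complex.I * ((s * y * z : ℝ) : ℂ)),
   ((1 / (c ^ 2 + s ^ 2 * z ^ 2) : ℝ) : ℂ) * ((z : ℂ) + Complex.I * ((s * c * (1 + z ^ 2) : ℝ) : ℂ)))

set_option maxHeartbeats 1000000 in
set_option maxHeartbeats 1000000 in
/-- `F_t` is horizontal with respect to the Hopf fibration: for every `p ∈ S²` and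
every tangent vector `u`, `Re h(dF_t(u), i·F_t(p)) = 0`, i.e. the differential of
`F_t` is orthogonal to the Hopf vector field `p ↦ ip`. -/
theorem whitneyLift_horizontal (t : ℝ) (ht : 0 ≤ t) :
    ∀ p : sphere (0 : EuclideanSpace ℝ (Fin 3)) 1,
      ∀ u : TangentSpace (𝓡 2) p,
        hermRe (mfderiv (𝓡 2) 𝓘(ℝ, ℂ × ℂ × ℂ) (whitneyLift t) p u)
          (Complex.I • whitneyLift t p) = 0 := by
  intro p u
  haveI : Fact (Module.finrank ℝ (EuclideanSpace ℝ (Fin 3)) = 2 + 1) := ⟨finrank_euclideanSpace_fin⟩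
  set c : ℝ := Real.cosh t with hc
  set s : ℝ := Real.sinh t with hs
  set x : ℝ := (p : E3) 0 with hxdef
  set y : ℝ := (p : E3) 1 with hydef
  set z : ℝ := (p : E3) 2 with hzdef
  -- the denominator is positive
  have hcpos : 0 < c := Real.cosh_pos t
  have hD0 : c ^ 2 + s ^ 2 * z ^ 2 ≠ 0 := by positivity
  -- derivatives of the coordinate functions
  have hx0 : HasFDerivAt (fun q : E3 => q 0)
      (EuclideanSpace.proj (𝕜 := ℝ) (ι := Fin 3) 0) (p : E3) :=
    (EuclideanSpace.proj (𝕜 := ℝ) (ι := Fin 3) 0).hasFDerivAt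
  have hx1 : HasFDerivAt (fun q : E3 => q 1)
      (EuclideanSpace.proj (𝕜 := ℝ) (ι := Fin 3) 1) (p : E3) :=
    (EuclideanSpace.proj (𝕜 := ℝ) (ι := Fin 3) 1).hasFDerivAt
  have hx2 : HasFDerivAt (fun q : E3 => q 2)
      (EuclideanSpace.proj (𝕜 := ℝ) (ι := Fin 3) 2) (p : E3) :=
    (EuclideanSpace.proj (𝕜 := ℝ) (ι := Fin 3) 2).hasFDerivAt
  -- derivative of the denominator reciprocal
  have hz2 : HasFDerivAt (fun q : E3 => (q 2 : ℝ) ^ 2) _ (p : E3) :=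
    (hx2.mul hx2).congr_of_eventuallyEq (Filter.Eventually.of_forall fun q => pow_two _)
  have hden : HasFDerivAt (fun q : E3 => c ^ 2 + s ^ 2 * (q 2) ^ 2) _ (p : E3) :=
    (hz2.const_mul (s ^ 2)).const_add (c ^ 2)
  have hDq : HasFDerivAt (fun q : E3 => (1 / (c ^ 2 + s ^ 2 * (q 2) ^ 2) : ℝ)) _ (p : E3) :=
    ((hasDerivAt_inv hD0).comp_hasFDerivAt (p : E3) hden).congr_of_eventuallyEq
      (Filter.Eventually.of_forall fun q => one_div _)
  -- complex-lift helper
  have lift : ∀ {f : E3 → ℝ} {L : E3 →L[ℝ] ℝ}, HasFDerivAt f L (p : E3) →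
      HasFDerivAt (fun q => ((f q : ℝ) : ℂ)) (Complex.ofRealCLM.comp L) (p : E3) := by
    intro f L hf
    exact (Complex.ofRealCLM.hasFDerivAt).comp _ hf
  have h1 : HasFDerivAt (fun q : E3 =>
      ((1 / (c ^ 2 + s ^ 2 * (q 2) ^ 2) : ℝ) : ℂ) *
        ((c * q 0 : ℝ) + Complex.I * ((s * q 0 * q 2 : ℝ) : ℂ))) _ (p : E3) :=
    (lift hDq).mul ((lift (hx0.const_mul c)).add
      (((lift (((hx0.const_mul s).mul hx2))).const_mul Complex.I)))
  have h2 : HasFDerivAt (fun q : E3 =>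
      ((1 / (c ^ 2 + s ^ 2 * (q 2) ^ 2) : ℝ) : ℂ) *
        ((c * q 1 : ℝ) + Complex.I * ((s * q 1 * q 2 : ℝ) : ℂ))) _ (p : E3) :=
    (lift hDq).mul ((lift (hx1.const_mul c)).add
      (((lift (((hx1.const_mul s).mul hx2))).const_mul Complex.I)))
  have h3 : HasFDerivAt (fun q : E3 =>
      ((1 / (c ^ 2 + s ^ 2 * (q 2) ^ 2) : ℝ) : ℂ) *
        (((q 2 : ℝ) : ℂ) + Complex.I * ((s * c * (1 + (q 2) ^ 2) : ℝ) : ℂ))) _ (p : E3) :=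
    (lift hDq).mul ((lift hx2).add
      (((lift (((hz2).const_add 1).const_mul (s * c))).const_mul Complex.I)))
  have hG : HasFDerivAt (whitneyG t) _ (p : E3) := HasFDerivAt.prodMk h1 (HasFDerivAt.prodMk h2 h3)
  -- identify the manifold derivative
  have hcoe : MDifferentiableAt (𝓡 2) 𝓘(ℝ, E3) ((↑) : sphere (0:E3) 1 → E3) p :=
    (contMDiff_coe_sphere (m := 1) p).mdifferentiableAt one_ne_zero
  have hcomp : whitneyLift t = whitneyG t ∘ ((↑) : sphere (0:E3) 1 → E3) := rfl
  have hmf : mfderiv (𝓡 2) 𝓘(ℝ, ℂ × ℂ × ℂ) (whitneyLift t) p =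
      (fderiv ℝ (whitneyG t) (p : E3)).comp
        (mfderiv (𝓡 2) 𝓘(ℝ, E3) ((↑) : sphere (0:E3) 1 → E3) p) := by
    rw [hcomp, mfderiv_comp p ((HasFDerivAt.differentiableAt hG).mdifferentiableAt) hcoe,
      mfderiv_eq_fderiv]; rfl
  set v : E3 := mfderiv (𝓡 2) 𝓘(ℝ, E3) ((↑) : sphere (0:E3) 1 → E3) p u with hvdef
  -- the tangent vector is orthogonal to p
  have hvmem : v ∈ (ℝ ∙ (p : E3))ᗮ := by
    rw [← range_mfderiv_coe_sphere (n := 2) (p : sphere (0:E3) 1)]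
    exact ⟨u, rfl⟩
  have hortho : x * v 0 + y * v 1 + z * v 2 = 0 := by
    have := (Submodule.mem_orthogonal_singleton_iff_inner_right).mp hvmem
    simpa [PiLp.inner_apply, RCLike.inner_apply, conj_trivial, Fin.sum_univ_three,
      hxdef, hydef, hzdef, mul_comm] using this
  -- p is on the sphere
  have hsph : x ^ 2 + y ^ 2 + z ^ 2 = 1 := by
    have h := p.2
    rw [mem_sphere_zero_iff_norm] at h
    have h2 : (inner ℝ (p : E3) (p : E3) : ℝ) = 1 := by
      rw [real_inner_self_eq_norm_sq, h]; norm_num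
    rw [PiLp.inner_apply] at h2
    simpa [PiLp.inner_apply, RCLike.inner_apply, conj_trivial, Fin.sum_univ_three, sq,
      hxdef, hydef, hzdef] using h2
  have final : hermRe ((fderiv ℝ (whitneyG t) (p : E3)) v)
      (Complex.I • whitneyG t (p : E3)) = 0 := by
    rw [HasFDerivAt.fderiv hG]
    simp only [whitneyG, hermRe, ContinuousLinearMap.prod_apply, ContinuousLinearMap.add_apply,
      ContinuousLinearMap.comp_apply, ContinuousLinearMap.smul_apply, Complex.ofRealCLM_apply,
      ContinuousLinearMap.coe_smul', Pi.smul_apply, PiLp.proj_apply, smul_eq_mul,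
      Prod.smul_fst, Prod.smul_snd]
    rw [← hxdef, ← hydef, ← hzdef]
    simp only [Complex.add_re, Complex.add_im, Complex.mul_re, Complex.mul_im, Complex.I_re,
      Complex.I_im, Complex.ofReal_re, Complex.ofReal_im, map_add, map_mul, Complex.conj_I,
      Complex.conj_ofReal, Complex.neg_re, Complex.neg_im, Complex.real_smul, smul_eq_mul]
    linear_combination (c * s * ((c ^ 2 + s ^ 2 * z ^ 2)⁻¹) ^ 2 * v 2) * hsph
  rw [hmf]
  exact final
end

section
/- For t > 0, let c = cosh t, s = sinh t, and define G_t : S² → ℂ³ by G_t(x,y,z) = (1/(s² + c²z²))·(sx + icxz, sy + icyz, z - isc(1+z²)). Then for every (x,y,z) ∈ S², |G_t₁|² + |G_t₂|² - |G_t₃|² = -1, where G_t = (G_t₁, G_t₂, G_t₃); i.e. G_t maps into the anti-de Sitter space H⁵₁ = {w ∈ ℂ³ : |w₁|² + |w₂|² - |w₃|² = -1}. -/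
lemma norm_sq_add_I_mul (a b : ℝ) : ‖((a : ℂ) + Complex.I * (b : ℂ))‖ ^ 2 = a ^ 2 + b ^ 2 := by
  simp [Complex.sq_norm, Complex.normSq_apply]
  ring

/-- The horizontal lift `G_t` of the Whitney sphere `Φ̂_t : S² → ℂH²` maps `S²` into the
anti-de Sitter space `H⁵₁ = {w ∈ ℂ³ : |w₁|² + |w₂|² - |w₃|² = -1}`: with `c = cosh t`,
`s = sinh t` (`t > 0`) and
`G_t(x,y,z) = (1/(s²+c²z²))·(sx + icxz, sy + icyz, z - isc(1+z²))`,
one has `|G₁|² + |G₂|² - |G₃|² = -1` whenever `x²+y²+z² = 1`. -/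
theorem whitney_lift_maps_into_antiDeSitter (t : ℝ) (ht : 0 < t) (c s : ℝ)
    (hc : c = Real.cosh t) (hs : s = Real.sinh t)
    (x y z : ℝ) (hxyz : x ^ 2 + y ^ 2 + z ^ 2 = 1)
    (G1 G2 G3 : ℂ)
    (hG1 : G1 = ((1 / (s ^ 2 + c ^ 2 * z ^ 2) : ℝ) : ℂ) *
      ((s * x : ℝ) + Complex.I * ((c * x * z : ℝ) : ℂ)))
    (hG2 : G2 = ((1 / (s ^ 2 + c ^ 2 * z ^ 2) : ℝ) : ℂ) *
      ((s * y : ℝ) + Complex.I * ((c * y * z : ℝ) : ℂ)))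
    (hG3 : G3 = ((1 / (s ^ 2 + c ^ 2 * z ^ 2) : ℝ) : ℂ) *
      ((z : ℂ) - Complex.I * ((s * c * (1 + z ^ 2) : ℝ) : ℂ))) :
    ‖G1‖ ^ 2 + ‖G2‖ ^ 2 - ‖G3‖ ^ 2 = -1 := by
  have hs0 : 0 < s := hs ▸ Real.sinh_pos_iff.mpr ht
  have hD : 0 < s ^ 2 + c ^ 2 * z ^ 2 := by positivity
  have hc2 : c ^ 2 = 1 + s ^ 2 := by
    rw [hc, hs, Real.cosh_sq]; ring
  have h3' : G3 = ((1 / (s ^ 2 + c ^ 2 * z ^ 2) : ℝ) : ℂ) *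
      ((z : ℂ) + Complex.I * ((-(s * c * (1 + z ^ 2)) : ℝ) : ℂ)) := by
    rw [hG3]; push_cast; ring
  rw [hG1, hG2, h3']
  rw [norm_mul, norm_mul, norm_mul, mul_pow, mul_pow, mul_pow,
    norm_sq_add_I_mul, norm_sq_add_I_mul, norm_sq_add_I_mul,
    Complex.norm_real, Real.norm_eq_abs, sq_abs]
  have hD' : s ^ 2 + c ^ 2 * z ^ 2 ≠ 0 := ne_of_gt hD
  field_simp
  linear_combination (s ^ 2 + c ^ 2 * z ^ 2) * hxyz + (c ^ 2 * z ^ 4 + z ^ 2 - s ^ 2) * hc2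
end

section
/- For s ∈ [0, π/4), define w : ℂ* → ℂ by w(z) = cos(s)·z + sin(s)·conj(z), and Ψ̃_s : ℂ* → ℂ³ by Ψ̃_s(z) = (1/|w(z)|²)·(cos²(s)·z² - sin²(s)·conj(z)², ((|z|²-1)/√2)·w(z), ((|z|²+1)/√2)·w(z)). Then w(z) ≠ 0 for all z ≠ 0, and |Ψ̃_s₁(z)|² + |Ψ̃_s₂(z)|² - |Ψ̃_s₃(z)|² = -1 for all z ∈ ℂ*, so Ψ̃_s maps into H⁵₁. -/
/-- The horizontal lift `Ψ̃_s` of the Lagrangian embedding `Ψ_s : ℂ* → ℂH²` (formula (4)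
of the paper): for `s ∈ [0, π/4)` and `w(z) = cos s · z + sin s · conj z`, one has
`w(z) ≠ 0` for `z ≠ 0`, and with
`Ψ̃_s(z) = (1/|w(z)|²)·(cos²s·z² - sin²s·(conj z)², ((|z|²-1)/√2)·w(z), ((|z|²+1)/√2)·w(z))`
one has `|Ψ̃₁|² + |Ψ̃₂|² - |Ψ̃₃|² = -1`, so `Ψ̃_s` maps `ℂ*` into `H⁵₁`. -/
theorem psi_lift_maps_into_antiDeSitter (s : ℝ) (hs0 : 0 ≤ s) (hs1 : s < Real.pi / 4)
    (w : ℂ → ℂ)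
    (hw : ∀ z : ℂ, w z = (Real.cos s : ℂ) * z + (Real.sin s : ℂ) * (starRingEnd ℂ) z)
    (Ψ1 Ψ2 Ψ3 : ℂ → ℂ)
    (hΨ1 : ∀ z : ℂ, Ψ1 z = ((1 / ‖w z‖ ^ 2 : ℝ) : ℂ) *
      ((Real.cos s : ℂ) ^ 2 * z ^ 2 - (Real.sin s : ℂ) ^ 2 * ((starRingEnd ℂ) z) ^ 2))
    (hΨ2 : ∀ z : ℂ, Ψ2 z = ((1 / ‖w z‖ ^ 2 : ℝ) : ℂ) *
      (((‖z‖ ^ 2 - 1) / Real.sqrt 2 : ℝ) : ℂ) * w z)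
    (hΨ3 : ∀ z : ℂ, Ψ3 z = ((1 / ‖w z‖ ^ 2 : ℝ) : ℂ) *
      (((‖z‖ ^ 2 + 1) / Real.sqrt 2 : ℝ) : ℂ) * w z) :
    ∀ z : ℂ, z ≠ 0 →
      w z ≠ 0 ∧ ‖Ψ1 z‖ ^ 2 + ‖Ψ2 z‖ ^ 2 - ‖Ψ3 z‖ ^ 2 = -1 := by
  intro z hz
  have hpi := Real.pi_pos
  set c := Real.cos s with hc
  set sn := Real.sin s with hsn
  have hsnc : sn < c := by
    have h1 : Real.cos (Real.pi/2 - s) < Real.cos s :=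
      Real.cos_lt_cos_of_nonneg_of_le_pi hs0 (by linarith) (by linarith)
    rwa [Real.cos_pi_div_two_sub] at h1
  have hsn0 : 0 ≤ sn := Real.sin_nonneg_of_nonneg_of_le_pi hs0 (by linarith)
  have hznorm : 0 < ‖z‖ := norm_pos_iff.mpr hz
  -- w z ≠ 0
  have hwne : w z ≠ 0 := by
    intro h
    rw [hw z] at h
    have h2 : (c:ℂ) * z = -((sn:ℂ) * (starRingEnd ℂ) z) := by linear_combination h
    have h3 := congrArg norm h2
    rw [norm_neg, norm_mul, norm_mul, Complex.norm_real, Complex.norm_real,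
      RingHomIsometric.norm_map, Real.norm_eq_abs, Real.norm_eq_abs,
      abs_of_pos (lt_of_le_of_lt hsn0 hsnc), abs_of_nonneg hsn0] at h3
    nlinarith
  have hN : 0 < ‖w z‖ ^ 2 := pow_pos (norm_pos_iff.mpr hwne) 2
  set N := ‖w z‖ ^ 2 with hNdef
  set M := ‖(c:ℂ)*z - (sn:ℂ)*(starRingEnd ℂ) z‖ ^ 2 with hM
  -- parallelogram identity
  have key : M + N = 2 * ‖z‖ ^ 2 := by
    have hpy : sn ^ 2 + c ^ 2 = 1 := Real.sin_sq_add_cos_sq s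
    rw [hM, hNdef, hw z]
    simp only [Complex.sq_norm, Complex.normSq_apply]
    simp [Complex.add_re, Complex.add_im, Complex.sub_re, Complex.sub_im,
      Complex.mul_re, Complex.mul_im]
    nlinarith [sq_nonneg z.re, sq_nonneg z.im]
  -- factorization for Ψ1
  have hfact : (c:ℂ) ^ 2 * z ^ 2 - (sn:ℂ) ^ 2 * ((starRingEnd ℂ) z) ^ 2
      = w z * ((c:ℂ)*z - (sn:ℂ)*(starRingEnd ℂ) z) := by
    rw [hw z]; ring
  have hNnorm : ‖((1 / N : ℝ) : ℂ)‖ = 1 / N := by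
    rw [Complex.norm_real, Real.norm_eq_abs, abs_of_pos (by positivity)]
  have h1 : ‖Ψ1 z‖ ^ 2 = (1/N)^2 * (N * M) := by
    rw [hΨ1 z, hfact, norm_mul, norm_mul, hNnorm, mul_pow, mul_pow, hM]
  have hs2 : Real.sqrt 2 ^ 2 = 2 := Real.sq_sqrt (by norm_num)
  have hs2pos : (0:ℝ) < Real.sqrt 2 := by positivity
  have h2 : ‖Ψ2 z‖ ^ 2 = (1/N)^2 * ((‖z‖^2 - 1)^2 / 2) * N := by
    rw [hΨ2 z, norm_mul, norm_mul, hNnorm, Complex.norm_real, Real.norm_eq_abs]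
    simp only [mul_pow, sq_abs, div_pow, hs2, ← hNdef]
  have h3 : ‖Ψ3 z‖ ^ 2 = (1/N)^2 * ((‖z‖^2 + 1)^2 / 2) * N := by
    rw [hΨ3 z, norm_mul, norm_mul, hNnorm, Complex.norm_real, Real.norm_eq_abs]
    simp only [mul_pow, sq_abs, div_pow, hs2, ← hNdef]
  refine ⟨hwne, ?_⟩
  rw [h1, h2, h3]
  have hMval : M = 2 * ‖z‖^2 - N := by linarith
  rw [hMval]
  field_simp
  ring
end

section
/- Define η̃ : ℝ² → ℂ³ by η̃(x,y) = (1/(1+4x²))·(2y + i·4xy, (2x - 4x³ - 4xy²) + i·(6x² + 2y²), (1 + 6x² + 2y²) + i·(4x³ + 4xy²)). Then for all (x,y) ∈ ℝ², |η̃₁|² + |η̃₂|² - |η̃₃|² = -1, so η̃ maps into the anti-de Sitter space H⁵₁ ⊂ ℂ³. -/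
lemma norm_sq_aux (r a b : ℝ) :
    ‖((r : ℂ)) * ((a : ℂ) + Complex.I * (b : ℂ))‖ ^ 2 = r ^ 2 * (a ^ 2 + b ^ 2) := by
  rw [Complex.sq_norm, Complex.normSq_apply]
  simp [Complex.mul_re, Complex.mul_im]
  ring

/-- The horizontal lift `η̃` of the Lagrangian embedding `η : ℂ → ℂH²` (formula (5)
of the paper) maps `ℝ²` into the anti-de Sitter space
`H⁵₁ = {w ∈ ℂ³ : |w₁|² + |w₂|² - |w₃|² = -1}`. -/
theorem eta_lift_maps_into_antiDeSitter
    (η1 η2 η3 : ℝ → ℝ → ℂ)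
    (h1 : ∀ x y : ℝ, η1 x y = ((1 / (1 + 4 * x ^ 2) : ℝ) : ℂ) *
      ((2 * y : ℝ) + Complex.I * ((4 * x * y : ℝ) : ℂ)))
    (h2 : ∀ x y : ℝ, η2 x y = ((1 / (1 + 4 * x ^ 2) : ℝ) : ℂ) *
      (((2 * x - 4 * x ^ 3 - 4 * x * y ^ 2 : ℝ) : ℂ)
        + Complex.I * ((6 * x ^ 2 + 2 * y ^ 2 : ℝ) : ℂ)))
    (h3 : ∀ x y : ℝ, η3 x y = ((1 / (1 + 4 * x ^ 2) : ℝ) : ℂ) *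
      (((1 + 6 * x ^ 2 + 2 * y ^ 2 : ℝ) : ℂ)
        + Complex.I * ((4 * x ^ 3 + 4 * x * y ^ 2 : ℝ) : ℂ))) :
    ∀ x y : ℝ, ‖η1 x y‖ ^ 2 + ‖η2 x y‖ ^ 2 - ‖η3 x y‖ ^ 2 = -1 := by
  intro x y
  have hd : (1 + 4 * x ^ 2 : ℝ) ≠ 0 := by positivity
  rw [h1, h2, h3, norm_sq_aux, norm_sq_aux, norm_sq_aux]
  field_simp
  ring
end
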